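/- arXiv:1312.4774 — 2 statements merged into one kernel-verified Lean document; each statement's English description precedes it below -/
import Mathlib

section
/- Let a ∈ ℝ_{>0}^{3+3n} and let ξ > 0 satisfy ξ ≠ ξ* and F1(ξ)·Δ(ξ) > 0, and set g = (g1(ξ), ξ, g3(ξ)) ∈ ℝ_{>0}^3. Then the coset condition Θ(g,a) = 0 holds if and only if P(ξ) = 0. -/
open Finset

namespace Phos

noncomputable section

/-- Standard basis vector of `ℝ^N`, with `1`-based index `j`. -/
def e (N : ℕ) (j : ℕ) : Fin N → ℝ := fun m => if (m : ℕ) + 1 = j then 1 else 0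

/-- Standard basis vector of `ℕ^N`, with `1`-based index `j`. -/
def eN (N : ℕ) (j : ℕ) : Fin N → ℕ := fun m => if (m : ℕ) + 1 = j then 1 else 0

/-- The stoichiometric matrix `S` of the `n`-site sequential distributive
phosphorylation network.  For each `i = 1,…,n` the six columns `6(i−1)+1,…,6(i−1)+6`
are `e_{1+3i}−e_1−e_{3i−1}`, `e_1+e_{3i−1}−e_{1+3i}`, `e_1+e_{2+3i}−e_{1+3i}`,
`e_{3+3i}−e_3−e_{2+3i}`, `e_3+e_{2+3i}−e_{3+3i}`, `e_3+e_{3i−1}−e_{3+3i}`. -/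
def Smat (n : ℕ) : Matrix (Fin (3*n+3)) (Fin (6*n)) ℝ :=
  Matrix.of fun m r =>
    (![e (3*n+3) (1+3*((r : ℕ)/6+1)) - e (3*n+3) 1 - e (3*n+3) (3*((r : ℕ)/6+1)-1),
       e (3*n+3) 1 + e (3*n+3) (3*((r : ℕ)/6+1)-1) - e (3*n+3) (1+3*((r : ℕ)/6+1)),
       e (3*n+3) 1 + e (3*n+3) (2+3*((r : ℕ)/6+1)) - e (3*n+3) (1+3*((r : ℕ)/6+1)),
       e (3*n+3) (3+3*((r : ℕ)/6+1)) - e (3*n+3) 3 - e (3*n+3) (2+3*((r : ℕ)/6+1)),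
       e (3*n+3) 3 + e (3*n+3) (2+3*((r : ℕ)/6+1)) - e (3*n+3) (3+3*((r : ℕ)/6+1)),
       e (3*n+3) 3 + e (3*n+3) (3*((r : ℕ)/6+1)-1) - e (3*n+3) (3+3*((r : ℕ)/6+1))])
      ⟨(r : ℕ) % 6, Nat.mod_lt _ (by norm_num)⟩ m

/-- The rate exponent matrix `Y`: for each `i = 1,…,n` the six columns
`6(i−1)+1,…,6(i−1)+6` are `e_1+e_{3i−1}`, `e_{1+3i}`, `e_{1+3i}`,
`e_3+e_{2+3i}`, `e_{3+3i}`, `e_{3+3i}`. -/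
def Ymat (n : ℕ) : Matrix (Fin (3*n+3)) (Fin (6*n)) ℕ :=
  Matrix.of fun m r =>
    (![eN (3*n+3) 1 + eN (3*n+3) (3*((r : ℕ)/6+1)-1),
       eN (3*n+3) (1+3*((r : ℕ)/6+1)),
       eN (3*n+3) (1+3*((r : ℕ)/6+1)),
       eN (3*n+3) 3 + eN (3*n+3) (2+3*((r : ℕ)/6+1)),
       eN (3*n+3) (3+3*((r : ℕ)/6+1)),
       eN (3*n+3) (3+3*((r : ℕ)/6+1))])
      ⟨(r : ℕ) % 6, Nat.mod_lt _ (by norm_num)⟩ m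

/-- The monomial map `Φ(x)_j = ∏ₘ xₘ^{Y_{mj}}`. -/
def Phi (n : ℕ) (x : Fin (3*n+3) → ℝ) : Fin (6*n) → ℝ :=
  fun r => ∏ m, x m ^ (Ymat n m r)

/-- The conservation matrix `Z` (rows `z1, z2, z3`). -/
def Zmat (n : ℕ) : Matrix (Fin 3) (Fin (3*n+3)) ℝ :=
  Matrix.of fun r j =>
    if (r : ℕ) = 0 then (if (j : ℕ) % 3 = 0 then 1 else 0)
    else if (r : ℕ) = 1 then
      (if (j : ℕ) % 3 = 1 then 1 else if (j : ℕ) = 0 ∨ (j : ℕ) = 2 then -1 else 0)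
    else (if (j : ℕ) % 3 = 2 then 1 else 0)

/-- The `6 × 3` block `E0`. -/
def E0 : Fin 6 → Fin 3 → ℝ :=
  ![![1,0,1], ![1,0,0], ![0,0,1], ![0,1,1], ![0,1,0], ![0,0,1]]

/-- The block diagonal matrix `E` with `n` copies of `E0`. -/
def Emat (n : ℕ) : Matrix (Fin (6*n)) (Fin (3*n)) ℝ :=
  Matrix.of fun r c =>
    if (r : ℕ) / 6 = (c : ℕ) / 3 then
      E0 ⟨(r : ℕ) % 6, Nat.mod_lt _ (by norm_num)⟩ ⟨(c : ℕ) % 3, Nat.mod_lt _ (by norm_num)⟩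
    else 0

/-- The matrix `L ∈ ℤ^{(3+3n)×3}`: row `1 = (1, n−1, −1)`, row `2 = (−1, −n, 0)`,
row `3 = (1, n−2, −1)`, and for `i = 1,…,n` rows `1+3i` and `3+3i` equal
`(0, i−2, −1)` while row `2+3i = (−1, i−n, 0)`. -/
def Lmat (n : ℕ) : Matrix (Fin (3*n+3)) (Fin 3) ℤ :=
  Matrix.of fun j c =>
    if (j : ℕ) = 0 then ![1, (n : ℤ) - 1, -1] c
    else if (j : ℕ) = 1 then ![-1, -(n : ℤ), 0] c
    else if (j : ℕ) = 2 then ![1, (n : ℤ) - 2, -1] c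
    else if (j : ℕ) % 3 = 1 then ![-1, (((j : ℕ) / 3 : ℕ) : ℤ) - (n : ℤ), 0] c
    else ![0, (((j : ℕ) / 3 : ℕ) : ℤ) - 2, -1] c

/-- `g^L ∈ ℝ_{>0}^{3+3n}`, `(g^L)_j = g₁^{L_{j1}} g₂^{L_{j2}} g₃^{L_{j3}}`. -/
def gL (n : ℕ) (g : Fin 3 → ℝ) : Fin (3*n+3) → ℝ :=
  fun j => ∏ c, g c ^ (Lmat n j c)

/-- The coset condition map `Θ(g,a) = Z diag(a) (g^L − 𝟙)`. -/
def Theta (n : ℕ) (g : Fin 3 → ℝ) (a : Fin (3*n+3) → ℝ) : Fin 3 → ℝ :=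
  (Zmat n).mulVec (fun j => a j * (gL n g j - 1))

/-- The rate constants `κ(a,λ)_j = (Eλ)_j / Φ(a)_j`. -/
def kappaOf (n : ℕ) (a : Fin (3*n+3) → ℝ) (lam : Fin (3*n) → ℝ) : Fin (6*n) → ℝ :=
  fun r => (Emat n).mulVec lam r / Phi n a r

/-- `x` is a (positive) steady state of `ẋ = S diag(κ) Φ(x)`. -/
def isSteady (n : ℕ) (κ : Fin (6*n) → ℝ) (x : Fin (3*n+3) → ℝ) : Prop :=
  (Smat n).mulVec (fun r => κ r * Phi n x r) = 0

/-- The `1`-based component `a_j` of a vector `a ∈ ℝ^{3+3n}`. -/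
def av (n : ℕ) (a : Fin (3*n+3) → ℝ) (j : ℕ) : ℝ :=
  if h : j - 1 < 3*n+3 then a ⟨j - 1, h⟩ else 0

/-- `ω1 = Σ_{k=0}^n a_{1+3k}`. -/
def om1 (n : ℕ) (a : Fin (3*n+3) → ℝ) : ℝ := ∑ k ∈ Finset.range (n+1), av n a (1+3*k)

/-- `ω2 = −a₁ − a₃ + Σ_{k=0}^n a_{2+3k}`. -/
def om2 (n : ℕ) (a : Fin (3*n+3) → ℝ) : ℝ :=
  -(av n a 1) - av n a 3 + ∑ k ∈ Finset.range (n+1), av n a (2+3*k)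

/-- `ω3 = Σ_{k=0}^n a_{3+3k}`. -/
def om3 (n : ℕ) (a : Fin (3*n+3) → ℝ) : ℝ := ∑ k ∈ Finset.range (n+1), av n a (3+3*k)

/-- `Ω2(ξ) = Σ_{k=0}^n a_{2+3k} ξ^k`. -/
def Om2 (n : ℕ) (a : Fin (3*n+3) → ℝ) (ξ : ℝ) : ℝ :=
  ∑ k ∈ Finset.range (n+1), av n a (2+3*k) * ξ ^ k

/-- `Ω4(ξ) = Σ_{k=1}^n a_{1+3k} ξ^{k−1}`. -/
def Om4 (n : ℕ) (a : Fin (3*n+3) → ℝ) (ξ : ℝ) : ℝ :=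
  ∑ k ∈ Finset.Icc 1 n, av n a (1+3*k) * ξ ^ (k-1)

/-- `Ω6(ξ) = Σ_{k=1}^n a_{3+3k} ξ^{k−1}`. -/
def Om6 (n : ℕ) (a : Fin (3*n+3) → ℝ) (ξ : ℝ) : ℝ :=
  ∑ k ∈ Finset.Icc 1 n, av n a (3+3*k) * ξ ^ (k-1)

/-- `Δ(ξ) = (a₁/ω1)ξ − a₃/ω3`. -/
def Dlt (n : ℕ) (a : Fin (3*n+3) → ℝ) (ξ : ℝ) : ℝ :=
  av n a 1 / om1 n a * ξ - av n a 3 / om3 n a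

/-- `ξ* = (ω1 a₃)/(a₁ ω3)`. -/
def xistar (n : ℕ) (a : Fin (3*n+3) → ℝ) : ℝ :=
  om1 n a * av n a 3 / (av n a 1 * om3 n a)

/-- `F1(ξ) = Ω6(ξ)/ω3 − Ω4(ξ)/ω1`. -/
def F1 (n : ℕ) (a : Fin (3*n+3) → ℝ) (ξ : ℝ) : ℝ :=
  Om6 n a ξ / om3 n a - Om4 n a ξ / om1 n a

/-- `F3(ξ) = (a₁ξ/ω1)(Ω6(ξ)/ω3) − (a₃/ω3)(Ω4(ξ)/ω1)`. -/
def F3 (n : ℕ) (a : Fin (3*n+3) → ℝ) (ξ : ℝ) : ℝ :=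
  av n a 1 * ξ / om1 n a * (Om6 n a ξ / om3 n a) - av n a 3 / om3 n a * (Om4 n a ξ / om1 n a)

/-- `A(ξ) = (Ω4(ξ)+Ω6(ξ))Ω2(ξ)`. -/
def Ap (n : ℕ) (a : Fin (3*n+3) → ℝ) (ξ : ℝ) : ℝ := (Om4 n a ξ + Om6 n a ξ) * Om2 n a ξ

/-- `B(ξ) = (a₁ξ + a₃)Ω2(ξ) − ω2 ξ (Ω4(ξ)+Ω6(ξ))`. -/
def Bp (n : ℕ) (a : Fin (3*n+3) → ℝ) (ξ : ℝ) : ℝ :=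
  (av n a 1 * ξ + av n a 3) * Om2 n a ξ - om2 n a * ξ * (Om4 n a ξ + Om6 n a ξ)

/-- `C(ξ) = ξ(a₁ξ + a₃)(ω1+ω2+ω3)`. -/
def Cp (n : ℕ) (a : Fin (3*n+3) → ℝ) (ξ : ℝ) : ℝ :=
  ξ * (av n a 1 * ξ + av n a 3) * (om1 n a + om2 n a + om3 n a)

/-- `P(ξ) = A(ξ)Δ(ξ)² + B(ξ)Δ(ξ)F1(ξ) − C(ξ)F1(ξ)²`. -/
def Pp (n : ℕ) (a : Fin (3*n+3) → ℝ) (ξ : ℝ) : ℝ :=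
  Ap n a ξ * (Dlt n a ξ)^2 + Bp n a ξ * Dlt n a ξ * F1 n a ξ - Cp n a ξ * (F1 n a ξ)^2

/-- `θ(ξ) = 2C(ξ)F1(ξ) − Δ(ξ)[B(ξ) + (B(ξ)² + 4A(ξ)C(ξ))^{1/2}]`. -/
def thetaFun (n : ℕ) (a : Fin (3*n+3) → ℝ) (ξ : ℝ) : ℝ :=
  2 * Cp n a ξ * F1 n a ξ -
    Dlt n a ξ * (Bp n a ξ + Real.sqrt ((Bp n a ξ)^2 + 4 * Ap n a ξ * Cp n a ξ))

/-- `g1(ξ) = ξ^{1−n} F1(ξ)/Δ(ξ)`. -/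
def g1f (n : ℕ) (a : Fin (3*n+3) → ℝ) (ξ : ℝ) : ℝ :=
  ξ ^ ((1 : ℤ) - (n : ℤ)) * F1 n a ξ / Dlt n a ξ

/-- `g3(ξ) = ξ^{−1} F3(ξ)/Δ(ξ)`. -/
def g3f (n : ℕ) (a : Fin (3*n+3) → ℝ) (ξ : ℝ) : ℝ :=
  ξ⁻¹ * F3 n a ξ / Dlt n a ξ

/-- The candidate second steady state `b = diag(g^L) a` built from a zero `ξ`
of the determining equation, with `g = (g1(ξ), ξ, g3(ξ))`. -/
def bOf (n : ℕ) (a : Fin (3*n+3) → ℝ) (ξ : ℝ) : Fin (3*n+3) → ℝ :=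
  fun j => gL n ![g1f n a ξ, ξ, g3f n a ξ] j * a j

end

end Phos
namespace Phos

set_option linter.dupNamespace false

private noncomputable def Gf (n : ℕ) (a : Fin (3*n+3) → ℝ) (ξ : ℝ) : ℕ → ℝ := fun jn =>
  if jn = 0 then g1f n a ξ * ξ^((n:ℤ)-1) * (g3f n a ξ)⁻¹
  else if jn = 1 then (g1f n a ξ)⁻¹ * ξ^(-(n:ℤ))
  else if jn = 2 then g1f n a ξ * ξ^((n:ℤ)-2) * (g3f n a ξ)⁻¹
  else if jn % 3 = 1 then (g1f n a ξ)⁻¹ * ξ^(((jn/3 : ℕ) : ℤ)-(n:ℤ))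
  else ξ^(((jn/3 : ℕ) : ℤ)-2) * (g3f n a ξ)⁻¹

private lemma sum_range_triple (m : ℕ) (f : ℕ → ℝ) :
    ∑ j ∈ Finset.range (3*m), f j
      = ∑ k ∈ Finset.range m, (f (3*k) + f (3*k+1) + f (3*k+2)) := by
  induction m with
  | zero => simp
  | succ m ih =>
    rw [show 3*(m+1) = (3*m+2)+1 by ring, Finset.sum_range_succ,
      show 3*m+2 = (3*m+1)+1 by ring, Finset.sum_range_succ, Finset.sum_range_succ, ih,
      Finset.sum_range_succ]
    ring

private lemma gL_eq_Gf (n : ℕ) (a : Fin (3*n+3) → ℝ) (ξ : ℝ) (j : Fin (3*n+3)) :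
    gL n ![g1f n a ξ, ξ, g3f n a ξ] j = Gf n a ξ (j : ℕ) := by
  rw [gL, Fin.prod_univ_three]
  by_cases h0 : (j:ℕ) = 0
  · simp [Gf, Lmat, h0, show j = 0 from Fin.ext (by simp [h0])]
  by_cases h1 : (j:ℕ) = 1
  · simp [Gf, Lmat, h0, h1, show j ≠ 0 from fun h => h0 (by simp [h])]
  by_cases h2 : (j:ℕ) = 2
  · simp [Gf, Lmat, h0, h1, h2, show j ≠ 0 from fun h => h0 (by simp [h])]
  by_cases hm : (j:ℕ) % 3 = 1
  · simp [Gf, Lmat, h0, h1, h2, hm, show j ≠ 0 from fun h => h0 (by simp [h])]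
  · simp [Gf, Lmat, h0, h1, h2, hm, show j ≠ 0 from fun h => h0 (by simp [h])]

private def Zf : Fin 3 → ℕ → ℝ := fun r jn =>
  if (r : ℕ) = 0 then (if jn % 3 = 0 then 1 else 0)
  else if (r : ℕ) = 1 then
    (if jn % 3 = 1 then 1 else if jn = 0 ∨ jn = 2 then -1 else 0)
  else (if jn % 3 = 2 then 1 else 0)

private lemma av_fin (n : ℕ) (a : Fin (3*n+3) → ℝ) (j : Fin (3*n+3)) :
    av n a ((j : ℕ)+1) = a j := by
  simp [av, j.isLt]

private lemma theta_eq (n : ℕ) (a : Fin (3*n+3) → ℝ) (ξ : ℝ) (r : Fin 3) :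
    Theta n ![g1f n a ξ, ξ, g3f n a ξ] a r
      = ∑ jn ∈ Finset.range (3*n+3), Zf r jn * (av n a (jn+1) * (Gf n a ξ jn - 1)) := by
  rw [Theta, Matrix.mulVec, dotProduct]
  rw [← Fin.sum_univ_eq_sum_range (fun jn => Zf r jn * (av n a (jn+1) * (Gf n a ξ jn - 1)))
      (3*n+3)]
  refine Finset.sum_congr rfl fun j _ => ?_
  rw [gL_eq_Gf, av_fin]
  rfl

private lemma Gf_3k3 (n : ℕ) (a : Fin (3*n+3) → ℝ) (ξ : ℝ) (k : ℕ) :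
    Gf n a ξ (3*k+3) = ξ^((k:ℤ)-1) * (g3f n a ξ)⁻¹ := by
  have h0 : ¬ (3*k+3 = 0) := by omega
  have h1 : ¬ (3*k+3 = 1) := by omega
  have h2 : ¬ (3*k+3 = 2) := by omega
  have hm : ¬ ((3*k+3) % 3 = 1) := by omega
  have hd : (3*k+3) / 3 = k+1 := by omega
  simp only [Gf, if_neg h0, if_neg h1, if_neg h2, if_neg hm, hd]
  norm_num
  left
  push_cast
  ring

private lemma Gf_3k5 (n : ℕ) (a : Fin (3*n+3) → ℝ) (ξ : ℝ) (k : ℕ) :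
    Gf n a ξ (3*k+5) = ξ^((k:ℤ)-1) * (g3f n a ξ)⁻¹ := by
  have h0 : ¬ (3*k+5 = 0) := by omega
  have h1 : ¬ (3*k+5 = 1) := by omega
  have h2 : ¬ (3*k+5 = 2) := by omega
  have hm : ¬ ((3*k+5) % 3 = 1) := by omega
  have hd : (3*k+5) / 3 = k+1 := by omega
  simp only [Gf, if_neg h0, if_neg h1, if_neg h2, if_neg hm, hd]
  norm_num
  left
  push_cast
  ring

private lemma Gf_3k1 (n : ℕ) (a : Fin (3*n+3) → ℝ) (ξ : ℝ) (k : ℕ) :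
    Gf n a ξ (3*k+1) = (g1f n a ξ)⁻¹ * ξ^((k:ℤ)-(n:ℤ)) := by
  rcases Nat.eq_zero_or_pos k with hk | hk
  · subst hk; simp [Gf]
  · have h0 : ¬ (3*k+1 = 0) := by omega
    have h1 : ¬ (3*k+1 = 1) := by omega
    have h2 : ¬ (3*k+1 = 2) := by omega
    have hm : (3*k+1) % 3 = 1 := by omega
    have hd : (3*k+1) / 3 = k := by omega
    simp only [Gf, if_neg h0, if_neg h1, if_neg h2, if_pos hm, hd]

private lemma om1_eq (n : ℕ) (a : Fin (3*n+3) → ℝ) :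
    om1 n a = av n a 1 + ∑ k ∈ Finset.range n, av n a (3*k+4) := by
  rw [om1, Finset.sum_range_succ',
    Finset.sum_congr rfl fun k (_ : k ∈ Finset.range n) =>
      (by rw [show 1+3*(k+1) = 3*k+4 by ring] : av n a (1+3*(k+1)) = av n a (3*k+4))]
  norm_num
  ring

private lemma om3_eq (n : ℕ) (a : Fin (3*n+3) → ℝ) :
    om3 n a = av n a 3 + ∑ k ∈ Finset.range n, av n a (3*k+6) := by
  rw [om3, Finset.sum_range_succ',
    Finset.sum_congr rfl fun k (_ : k ∈ Finset.range n) =>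
      (by rw [show 3+3*(k+1) = 3*k+6 by ring] : av n a (3+3*(k+1)) = av n a (3*k+6))]
  norm_num
  ring

private lemma om2_eq (n : ℕ) (a : Fin (3*n+3) → ℝ) :
    om2 n a = -(av n a 1) - av n a 3 + ∑ k ∈ Finset.range (n+1), av n a (3*k+2) := by
  rw [om2]
  congr 1
  exact Finset.sum_congr rfl fun k _ => by rw [show 2+3*k = 3*k+2 by ring]

private lemma Om2_eq (n : ℕ) (a : Fin (3*n+3) → ℝ) (ξ : ℝ) :
    Om2 n a ξ = ∑ k ∈ Finset.range (n+1), av n a (3*k+2) * ξ^k := by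
  exact Finset.sum_congr rfl fun k _ => by rw [show 2+3*k = 3*k+2 by ring]

private lemma Om4_eq (n : ℕ) (a : Fin (3*n+3) → ℝ) (ξ : ℝ) :
    Om4 n a ξ = ∑ k ∈ Finset.range n, av n a (3*k+4) * ξ^k := by
  rw [Om4, show Finset.Icc 1 n = Finset.Ico 1 (n+1) by rw [Finset.Ico_add_one_right_eq_Icc],
    Finset.sum_Ico_eq_sum_range]
  simp only [Nat.add_sub_cancel]
  exact Finset.sum_congr rfl fun k _ => by
    rw [show 1+3*(1+k) = 3*k+4 by ring, show 1+k-1 = k by omega]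

private lemma Om6_eq (n : ℕ) (a : Fin (3*n+3) → ℝ) (ξ : ℝ) :
    Om6 n a ξ = ∑ k ∈ Finset.range n, av n a (3*k+6) * ξ^k := by
  rw [Om6, show Finset.Icc 1 n = Finset.Ico 1 (n+1) by rw [Finset.Ico_add_one_right_eq_Icc],
    Finset.sum_Ico_eq_sum_range]
  simp only [Nat.add_sub_cancel]
  exact Finset.sum_congr rfl fun k _ => by
    rw [show 3+3*(1+k) = 3*k+6 by ring, show 1+k-1 = k by omega]

private lemma zpow_km1 (ξ : ℝ) (hξ : ξ ≠ 0) (k : ℕ) : ξ^((k:ℤ)-1) = ξ^k * ξ⁻¹ := by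
  rw [zpow_sub₀ hξ, zpow_natCast, zpow_one, div_eq_mul_inv]

private lemma theta0_eq (n : ℕ) (a : Fin (3*n+3) → ℝ) (ξ : ℝ) (hξ : ξ ≠ 0) :
    Theta n ![g1f n a ξ, ξ, g3f n a ξ] a 0
      = av n a 1 * (g1f n a ξ * ξ^((n:ℤ)-1) * (g3f n a ξ)⁻¹)
        + Om4 n a ξ * (ξ⁻¹ * (g3f n a ξ)⁻¹) - om1 n a := by
  rw [theta_eq, show (3*n+3) = 3*(n+1) by ring, sum_range_triple]
  have step : ∀ k ∈ Finset.range (n+1),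
      (Zf 0 (3*k) * (av n a (3*k+1) * (Gf n a ξ (3*k) - 1))
       + Zf 0 (3*k+1) * (av n a (3*k+1+1) * (Gf n a ξ (3*k+1) - 1))
       + Zf 0 (3*k+2) * (av n a (3*k+2+1) * (Gf n a ξ (3*k+2) - 1)))
      = av n a (3*k+1) * (Gf n a ξ (3*k) - 1) := by
    intro k _
    have e0 : Zf 0 (3*k) = 1 := by simp [Zf]
    have e1 : Zf 0 (3*k+1) = 0 := by
      have h : (3*k+1) % 3 = 1 := by omega
      simp [Zf, h]
    have e2 : Zf 0 (3*k+2) = 0 := by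
      have h : (3*k+2) % 3 = 2 := by omega
      simp [Zf, h]
    rw [e0, e1, e2]; ring
  rw [Finset.sum_congr rfl step, Finset.sum_range_succ']
  have step2 : ∀ k ∈ Finset.range n,
      av n a (3*(k+1)+1) * (Gf n a ξ (3*(k+1)) - 1)
      = av n a (3*k+4) * ξ^k * (ξ⁻¹ * (g3f n a ξ)⁻¹) - av n a (3*k+4) := by
    intro k _
    rw [show 3*(k+1) = 3*k+3 by ring, Gf_3k3, zpow_km1 ξ hξ]
    rw [show 3*k+3+1 = 3*k+4 by ring]
    ring
  rw [Finset.sum_congr rfl step2, Finset.sum_sub_distrib, ← Finset.sum_mul, ← Om4_eq, om1_eq]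
  have g0 : Gf n a ξ (3*0) = g1f n a ξ * ξ^((n:ℤ)-1) * (g3f n a ξ)⁻¹ := by simp [Gf]
  rw [g0]
  norm_num
  ring

private lemma theta2_eq (n : ℕ) (a : Fin (3*n+3) → ℝ) (ξ : ℝ) (hξ : ξ ≠ 0) :
    Theta n ![g1f n a ξ, ξ, g3f n a ξ] a 2
      = av n a 3 * (g1f n a ξ * ξ^((n:ℤ)-2) * (g3f n a ξ)⁻¹)
        + Om6 n a ξ * (ξ⁻¹ * (g3f n a ξ)⁻¹) - om3 n a := by
  rw [theta_eq, show (3*n+3) = 3*(n+1) by ring, sum_range_triple]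
  have step : ∀ k ∈ Finset.range (n+1),
      (Zf 2 (3*k) * (av n a (3*k+1) * (Gf n a ξ (3*k) - 1))
       + Zf 2 (3*k+1) * (av n a (3*k+1+1) * (Gf n a ξ (3*k+1) - 1))
       + Zf 2 (3*k+2) * (av n a (3*k+2+1) * (Gf n a ξ (3*k+2) - 1)))
      = av n a (3*k+3) * (Gf n a ξ (3*k+2) - 1) := by
    intro k _
    have e0 : Zf 2 (3*k) = 0 := by simp [Zf]
    have e1 : Zf 2 (3*k+1) = 0 := by
      have h : (3*k+1) % 3 = 1 := by omega
      simp [Zf, h]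
    have e2 : Zf 2 (3*k+2) = 1 := by
      have h : (3*k+2) % 3 = 2 := by omega
      simp [Zf, h]
    rw [e0, e1, e2, show 3*k+2+1 = 3*k+3 by ring]; ring
  rw [Finset.sum_congr rfl step, Finset.sum_range_succ']
  have step2 : ∀ k ∈ Finset.range n,
      av n a (3*(k+1)+3) * (Gf n a ξ (3*(k+1)+2) - 1)
      = av n a (3*k+6) * ξ^k * (ξ⁻¹ * (g3f n a ξ)⁻¹) - av n a (3*k+6) := by
    intro k _
    rw [show 3*(k+1)+2 = 3*k+5 by ring, Gf_3k5, zpow_km1 ξ hξ,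
      show 3*(k+1)+3 = 3*k+6 by ring]
    ring
  rw [Finset.sum_congr rfl step2, Finset.sum_sub_distrib, ← Finset.sum_mul, ← Om6_eq, om3_eq]
  have g2 : Gf n a ξ (3*0+2) = g1f n a ξ * ξ^((n:ℤ)-2) * (g3f n a ξ)⁻¹ := by simp [Gf]
  rw [g2]
  norm_num
  ring

private lemma theta1_eq (n : ℕ) (a : Fin (3*n+3) → ℝ) (ξ : ℝ) (hξ : ξ ≠ 0) :
    Theta n ![g1f n a ξ, ξ, g3f n a ξ] a 1
      = -(av n a 1 * (g1f n a ξ * ξ^((n:ℤ)-1) * (g3f n a ξ)⁻¹))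
        - av n a 3 * (g1f n a ξ * ξ^((n:ℤ)-2) * (g3f n a ξ)⁻¹)
        + Om2 n a ξ * (ξ^(-(n:ℤ)) * (g1f n a ξ)⁻¹) - om2 n a := by
  have zpow_kmn : ∀ k : ℕ, ξ^((k:ℤ)-(n:ℤ)) = ξ^k * ξ^(-(n:ℤ)) := by
    intro k
    rw [sub_eq_add_neg, zpow_add₀ hξ, zpow_natCast]
  rw [theta_eq, show (3*n+3) = 3*(n+1) by ring, sum_range_triple]
  have step : ∀ k ∈ Finset.range (n+1),
      (Zf 1 (3*k) * (av n a (3*k+1) * (Gf n a ξ (3*k) - 1))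
       + Zf 1 (3*k+1) * (av n a (3*k+1+1) * (Gf n a ξ (3*k+1) - 1))
       + Zf 1 (3*k+2) * (av n a (3*k+2+1) * (Gf n a ξ (3*k+2) - 1)))
      = (if k = 0 then
          (-(av n a 1 * (g1f n a ξ * ξ^((n:ℤ)-1) * (g3f n a ξ)⁻¹ - 1))
            - av n a 3 * (g1f n a ξ * ξ^((n:ℤ)-2) * (g3f n a ξ)⁻¹ - 1)) else 0)
        + (av n a (3*k+2) * ξ^k * (ξ^(-(n:ℤ)) * (g1f n a ξ)⁻¹) - av n a (3*k+2)) := by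
    intro k _
    have e1 : Zf 1 (3*k+1) = 1 := by
      have h : (3*k+1) % 3 = 1 := by omega
      simp [Zf, h]
    rw [e1, show 3*k+1+1 = 3*k+2 by ring, Gf_3k1, zpow_kmn]
    rcases Nat.eq_zero_or_pos k with hk | hk
    · subst hk
      have e0 : Zf 1 (3*0) = -1 := by norm_num [Zf]
      have e2 : Zf 1 (3*0+2) = -1 := by norm_num [Zf]
      have g0 : Gf n a ξ (3*0) = g1f n a ξ * ξ^((n:ℤ)-1) * (g3f n a ξ)⁻¹ := by simp [Gf]
      have g2 : Gf n a ξ (3*0+2) = g1f n a ξ * ξ^((n:ℤ)-2) * (g3f n a ξ)⁻¹ := by simp [Gf]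
      rw [e0, e2, g0, g2]
      norm_num
      ring
    · have e0 : Zf 1 (3*k) = 0 := by
        have h : (3*k) % 3 = 0 := by omega
        have h0 : ¬ (3*k = 0) := by omega
        have h2 : ¬ (3*k = 2) := by omega
        simp [Zf, h, h0, h2]
      have e2 : Zf 1 (3*k+2) = 0 := by
        have h : (3*k+2) % 3 = 2 := by omega
        have h0 : ¬ (3*k+2 = 0) := by omega
        have h2 : ¬ (3*k+2 = 2) := by omega
        simp [Zf, h, h0, h2, hk.ne']
      rw [e0, e2, if_neg (by omega : ¬ k = 0)]
      ring
  rw [Finset.sum_congr rfl step, Finset.sum_add_distrib, Finset.sum_ite_eq' (Finset.range (n+1)) 0,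
    if_pos (by simp : (0:ℕ) ∈ Finset.range (n+1)), Finset.sum_sub_distrib, ← Finset.sum_mul,
    ← Om2_eq, om2_eq]
  ring

/-- For an admissible `ξ` (`ξ > 0`, `ξ ≠ ξ*`, `F1(ξ)Δ(ξ) > 0`)
and `g = (g1(ξ), ξ, g3(ξ)) ∈ ℝ_{>0}³`, the coset condition `Θ(g,a) = 0`
holds iff `P(ξ) = 0`. -/
theorem coset_condition_iff_P_eq_zero (n : ℕ) (hn : 2 ≤ n)
    (a : Fin (3*n+3) → ℝ) (ha : ∀ j, 0 < a j)
    (ξ : ℝ) (hξ : 0 < ξ) (hne : ξ ≠ xistar n a)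
    (hadm : 0 < F1 n a ξ * Dlt n a ξ) :
    Theta n ![g1f n a ξ, ξ, g3f n a ξ] a = 0 ↔ Pp n a ξ = 0 := by
  have hξ0 : ξ ≠ 0 := ne_of_gt hξ
  have hav : ∀ j : ℕ, j - 1 < 3*n+3 → 0 < av n a j := by
    intro j h
    simp only [av, dif_pos h]
    exact ha _
  have ha1 : 0 < av n a 1 := hav 1 (by omega)
  have ha3 : 0 < av n a 3 := hav 3 (by omega)
  have hw1 : 0 < om1 n a := by
    rw [om1_eq]
    have : 0 ≤ ∑ k ∈ Finset.range n, av n a (3*k+4) :=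
      Finset.sum_nonneg fun k hk => le_of_lt (hav _ (by
        have := Finset.mem_range.mp hk; omega))
    linarith
  have hw3 : 0 < om3 n a := by
    rw [om3_eq]
    have : 0 ≤ ∑ k ∈ Finset.range n, av n a (3*k+6) :=
      Finset.sum_nonneg fun k hk => le_of_lt (hav _ (by
        have := Finset.mem_range.mp hk; omega))
    linarith
  have hO4 : 0 < Om4 n a ξ := by
    rw [Om4_eq]
    exact Finset.sum_pos (fun k hk => mul_pos (hav _ (by
      have := Finset.mem_range.mp hk; omega)) (pow_pos hξ k))
      ⟨0, Finset.mem_range.mpr (by omega)⟩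
  have hO6 : 0 < Om6 n a ξ := by
    rw [Om6_eq]
    exact Finset.sum_pos (fun k hk => mul_pos (hav _ (by
      have := Finset.mem_range.mp hk; omega)) (pow_pos hξ k))
      ⟨0, Finset.mem_range.mpr (by omega)⟩
  have hO2 : 0 < Om2 n a ξ := by
    rw [Om2_eq]
    exact Finset.sum_pos (fun k hk => mul_pos (hav _ (by
      have := Finset.mem_range.mp hk; omega)) (pow_pos hξ k))
      ⟨0, Finset.mem_range.mpr (by omega)⟩
  have hD : Dlt n a ξ ≠ 0 := by
    intro h
    apply hne
    rw [Dlt] at h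
    rw [xistar]
    field_simp at h
    field_simp
    linarith
  have hf1 : F1 n a ξ ≠ 0 := by
    intro h; rw [h, zero_mul] at hadm; exact lt_irrefl 0 hadm
  have hA : om1 n a * F3 n a ξ = Dlt n a ξ * Om4 n a ξ + av n a 1 * ξ * F1 n a ξ := by
    rw [F3, F1, Dlt]; field_simp; ring
  have hB : om3 n a * F3 n a ξ = Dlt n a ξ * Om6 n a ξ + av n a 3 * F1 n a ξ := by
    rw [F3, F1, Dlt]; field_simp; ring
  have hD2 : 0 < Dlt n a ξ ^ 2 := (sq_nonneg _).lt_of_ne (Ne.symm (pow_ne_zero 2 hD))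
  have hf3D : 0 < F3 n a ξ * Dlt n a ξ := by
    have h1 : om1 n a * (F3 n a ξ * Dlt n a ξ)
        = Dlt n a ξ^2 * Om4 n a ξ + av n a 1 * ξ * (F1 n a ξ * Dlt n a ξ) := by
      linear_combination Dlt n a ξ * hA
    nlinarith [mul_pos hD2 hO4, mul_pos (mul_pos ha1 hξ) hadm]
  have hf3 : F3 n a ξ ≠ 0 := by
    intro h; rw [h, zero_mul] at hf3D; exact lt_irrefl 0 hf3D
  have hg1ne : g1f n a ξ ≠ 0 := by
    rw [g1f]; exact div_ne_zero (mul_ne_zero (zpow_ne_zero _ hξ0) hf1) hD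
  have hzz1 : ξ^((1:ℤ)-(n:ℤ)) * ξ^((n:ℤ)-1) = 1 := by
    rw [← zpow_add₀ hξ0, show (1:ℤ)-(n:ℤ)+((n:ℤ)-1) = 0 by ring, zpow_zero]
  have hkey1 : g1f n a ξ * ξ^((n:ℤ)-1) = F1 n a ξ / Dlt n a ξ := by
    rw [g1f, div_mul_eq_mul_div, div_eq_div_iff hD hD]
    linear_combination F1 n a ξ * Dlt n a ξ * hzz1
  have hzz2 : ξ^((1:ℤ)-(n:ℤ)) * ξ^((n:ℤ)-2) * ξ = 1 := by
    rw [← zpow_add₀ hξ0, show (1:ℤ)-(n:ℤ)+((n:ℤ)-2) = -1 by ring, zpow_neg_one,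
      inv_mul_cancel₀ hξ0]
  have hkey2 : g1f n a ξ * ξ^((n:ℤ)-2) = F1 n a ξ / (Dlt n a ξ * ξ) := by
    rw [g1f, div_mul_eq_mul_div, div_eq_div_iff hD (mul_ne_zero hD hξ0)]
    linear_combination F1 n a ξ * Dlt n a ξ * hzz2
  have hzz4 : ξ^((1:ℤ)-(n:ℤ)) = ξ^(-(n:ℤ)) * ξ := by
    rw [sub_eq_add_neg, add_comm, zpow_add₀ hξ0, zpow_one]
  have hkey3 : ξ^(-(n:ℤ)) * (g1f n a ξ)⁻¹ = Dlt n a ξ / (F1 n a ξ * ξ) := by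
    rw [eq_div_iff (mul_ne_zero hf1 hξ0)]
    have hgd : g1f n a ξ * Dlt n a ξ = ξ^((1:ℤ)-(n:ℤ)) * F1 n a ξ := by
      rw [g1f, div_mul_cancel₀ _ hD]
    have h1 : g1f n a ξ * (ξ^(-(n:ℤ)) * (g1f n a ξ)⁻¹ * (F1 n a ξ * ξ))
        = g1f n a ξ * Dlt n a ξ := by
      rw [hgd, hzz4]
      field_simp
    exact mul_left_cancel₀ hg1ne h1
  have hG3inv : (g3f n a ξ)⁻¹ = ξ * Dlt n a ξ / F3 n a ξ := by
    rw [g3f]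
    field_simp
  have hT0 : Theta n ![g1f n a ξ, ξ, g3f n a ξ] a 0 = 0 := by
    rw [theta0_eq n a ξ hξ0, hkey1, hG3inv]
    field_simp
    linear_combination (-1) * hA
  have hT2 : Theta n ![g1f n a ξ, ξ, g3f n a ξ] a 2 = 0 := by
    rw [theta2_eq n a ξ hξ0, hkey2, hG3inv]
    field_simp
    linear_combination (-1) * hB
  have hTh1 : Theta n ![g1f n a ξ, ξ, g3f n a ξ] a 1 * (ξ * F1 n a ξ * F3 n a ξ)
      = Om2 n a ξ * Dlt n a ξ * F3 n a ξ - om2 n a * ξ * F1 n a ξ * F3 n a ξ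
        - (av n a 1 * ξ + av n a 3) * ξ * (F1 n a ξ)^2 := by
    rw [theta1_eq n a ξ hξ0, hkey1, hkey2, hkey3, hG3inv]
    field_simp
    ring
  have hPQ : Pp n a ξ = (om1 n a + om3 n a) *
      (Om2 n a ξ * Dlt n a ξ * F3 n a ξ - om2 n a * ξ * F1 n a ξ * F3 n a ξ
        - (av n a 1 * ξ + av n a 3) * ξ * (F1 n a ξ)^2) := by
    rw [Pp, Ap, Bp, Cp]
    linear_combination (om2 n a * ξ * F1 n a ξ - Om2 n a ξ * Dlt n a ξ) * (hA) +
      (om2 n a * ξ * F1 n a ξ - Om2 n a ξ * Dlt n a ξ) * (hB)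
  constructor
  · intro h
    have h1 : Theta n ![g1f n a ξ, ξ, g3f n a ξ] a 1 = 0 := by rw [h]; rfl
    rw [hPQ, ← hTh1, h1, zero_mul, mul_zero]
  · intro hP
    have hcne : ξ * F1 n a ξ * F3 n a ξ ≠ 0 := mul_ne_zero (mul_ne_zero hξ0 hf1) hf3
    have hQ0 : Om2 n a ξ * Dlt n a ξ * F3 n a ξ - om2 n a * ξ * F1 n a ξ * F3 n a ξ
        - (av n a 1 * ξ + av n a 3) * ξ * (F1 n a ξ)^2 = 0 := by
      rw [hP] at hPQ
      rcases mul_eq_zero.mp hPQ.symm with h | h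
      · exact absurd h (by linarith)
      · exact h
    have hT1 : Theta n ![g1f n a ξ, ξ, g3f n a ξ] a 1 = 0 :=
      (mul_eq_zero.mp (hTh1.trans hQ0)).resolve_right hcne
    funext r
    fin_cases r
    · simpa using hT0
    · simpa using hT1
    · simpa using hT2

end Phos
end

section
/- (At most 2n−1 admissible zeros) Let a ∈ ℝ_{>0}^{3+3n}. Then the set of admissible zeros { ξ > 0 : ξ ≠ ξ*, P(ξ) = 0 and F1(ξ)·Δ(ξ) > 0 } has at most 2n−1 elements. -/
open Finset

namespace Phos

section AuxPhos

open Polynomial Filter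

variable (n : ℕ) (a : Fin (3*n+3) → ℝ)

lemma aux_sign_parity (N : ℕ) : ∀ p : Polynomial ℝ, p.natDegree ≤ N → ∀ x y : ℝ, x ≤ y →
    p.eval x * p.eval y ≠ 0 →
    (0 < p.eval x * p.eval y ↔
      Even (Multiset.card (p.roots.filter (fun r => x < r ∧ r < y)))) := by
  induction N with
  | zero =>
    intro p hp x y _ hne
    rw [Polynomial.eq_C_of_natDegree_le_zero hp] at hne ⊢
    simp only [Polynomial.eval_C] at hne ⊢
    rw [Polynomial.roots_C]
    simp only [Multiset.filter_zero, Multiset.card_zero, Even.zero, iff_true]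
    rcases (mul_self_nonneg (p.coeff 0)).lt_or_eq with h | h
    · exact h
    · exact absurd h.symm hne
  | succ N ih =>
    intro p hp x y hxy hne
    have hp0 : p ≠ 0 := by rintro rfl; simp at hne
    by_cases hroot : ∃ r, x < r ∧ r < y ∧ p.IsRoot r
    · obtain ⟨r, hxr, hry, hr⟩ := hroot
      set q := p /ₘ (X - C r) with hqdef
      have hpq : (X - C r) * q = p := Polynomial.mul_divByMonic_eq_iff_isRoot.mpr hr
      have hq0 : q ≠ 0 := by rintro h; rw [h, mul_zero] at hpq; exact hp0 hpq.symm
      have hdeg : q.natDegree ≤ N := by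
        have h1 : p.natDegree = 1 + q.natDegree := by
          rw [← hpq, Polynomial.natDegree_mul (Polynomial.X_sub_C_ne_zero r) hq0,
            Polynomial.natDegree_X_sub_C]
        omega
      have hex : p.eval x = (x - r) * q.eval x := by rw [← hpq]; simp
      have hey : p.eval y = (y - r) * q.eval y := by rw [← hpq]; simp
      have hqne : q.eval x * q.eval y ≠ 0 := by
        intro h; apply hne; rw [hex, hey]
        rcases mul_eq_zero.mp h with h' | h' <;> rw [h'] <;> ring
      have hroots : p.roots = r ::ₘ q.roots := by
        rw [← hpq, Polynomial.roots_mul (hpq.symm ▸ hp0), Polynomial.roots_X_sub_C,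
          Multiset.singleton_add]
      have hcard : Multiset.card (p.roots.filter (fun s => x < s ∧ s < y))
          = Multiset.card (q.roots.filter (fun s => x < s ∧ s < y)) + 1 := by
        rw [hroots, Multiset.filter_cons, if_pos ⟨hxr, hry⟩]
        simp [add_comm]
      have hiff := ih q hdeg x y hxy hqne
      rw [hcard, Nat.even_add_one, ← hiff, hex, hey]
      constructor
      · intro h hq
        nlinarith [mul_pos hq (mul_pos (sub_pos.mpr hxr) (sub_pos.mpr hry))]
      · intro h
        have h2 : q.eval x * q.eval y < 0 := lt_of_le_of_ne (not_lt.mp h) hqne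
        nlinarith [mul_pos (neg_pos.mpr h2) (mul_pos (sub_pos.mpr hxr) (sub_pos.mpr hry))]
    · have hfilter : p.roots.filter (fun s => x < s ∧ s < y) = 0 := by
        rw [Multiset.filter_eq_nil]
        intro s hs hcond
        exact hroot ⟨s, hcond.1, hcond.2, (Polynomial.mem_roots hp0).mp hs⟩
      rw [hfilter]
      simp only [Multiset.card_zero, Even.zero, iff_true]
      have hcont : ContinuousOn (fun t => p.eval t) (Set.Icc x y) :=
        p.continuous.continuousOn
      rcases lt_trichotomy (p.eval x * p.eval y) 0 with h | h | h
      · exfalso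
        rcases mul_neg_iff.mp h with ⟨hpx, hpy⟩ | ⟨hpx, hpy⟩
        · obtain ⟨z, hz, hz0⟩ := intermediate_value_Ioo' hxy hcont
            (Set.mem_Ioo.mpr ⟨hpy, hpx⟩)
          exact hroot ⟨z, hz.1, hz.2, hz0⟩
        · obtain ⟨z, hz, hz0⟩ := intermediate_value_Ioo hxy hcont
            (Set.mem_Ioo.mpr ⟨hpx, hpy⟩)
          exact hroot ⟨z, hz.1, hz.2, hz0⟩
      · exact absurd h hne
      · exact h

noncomputable def pOm2 : Polynomial ℝ :=
  ∑ k ∈ Finset.range (n+1), C (av n a (2+3*k)) * X ^ k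

noncomputable def pOm4 : Polynomial ℝ :=
  ∑ k ∈ Finset.Icc 1 n, C (av n a (1+3*k)) * X ^ (k-1)

noncomputable def pOm6 : Polynomial ℝ :=
  ∑ k ∈ Finset.Icc 1 n, C (av n a (3+3*k)) * X ^ (k-1)

noncomputable def pDlt : Polynomial ℝ :=
  C (av n a 1 / om1 n a) * X - C (av n a 3 / om3 n a)

noncomputable def pF1 : Polynomial ℝ :=
  C (om3 n a)⁻¹ * pOm6 n a - C (om1 n a)⁻¹ * pOm4 n a

noncomputable def pA : Polynomial ℝ := (pOm4 n a + pOm6 n a) * pOm2 n a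

noncomputable def pB : Polynomial ℝ :=
  (C (av n a 1) * X + C (av n a 3)) * pOm2 n a - C (om2 n a) * X * (pOm4 n a + pOm6 n a)

noncomputable def pC : Polynomial ℝ :=
  X * (C (av n a 1) * X + C (av n a 3)) * C (om1 n a + om2 n a + om3 n a)

noncomputable def pP : Polynomial ℝ :=
  pA n a * pDlt n a ^ 2 + pB n a * pDlt n a * pF1 n a - pC n a * pF1 n a ^ 2

variable (ξ : ℝ)

lemma eval_pOm2 : (pOm2 n a).eval ξ = Om2 n a ξ := by
  simp [pOm2, Om2, Polynomial.eval_finset_sum]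

lemma eval_pOm4 : (pOm4 n a).eval ξ = Om4 n a ξ := by
  simp [pOm4, Om4, Polynomial.eval_finset_sum]

lemma eval_pOm6 : (pOm6 n a).eval ξ = Om6 n a ξ := by
  simp [pOm6, Om6, Polynomial.eval_finset_sum]

lemma eval_pDlt : (pDlt n a).eval ξ = Dlt n a ξ := by
  simp [pDlt, Dlt]

lemma eval_pF1 : (pF1 n a).eval ξ = F1 n a ξ := by
  simp only [pF1, F1, Polynomial.eval_sub, Polynomial.eval_mul, Polynomial.eval_C,
    eval_pOm4, eval_pOm6]
  ring

lemma eval_pA : (pA n a).eval ξ = Ap n a ξ := by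
  simp [pA, Ap, eval_pOm2, eval_pOm4, eval_pOm6]

lemma eval_pB : (pB n a).eval ξ = Bp n a ξ := by
  simp [pB, Bp, eval_pOm2, eval_pOm4, eval_pOm6]

lemma eval_pC : (pC n a).eval ξ = Cp n a ξ := by
  simp [pC, Cp]

lemma eval_pP : (pP n a).eval ξ = Pp n a ξ := by
  simp [pP, Pp, eval_pA, eval_pB, eval_pC, eval_pDlt, eval_pF1]

lemma deg_pOm2 : (pOm2 n a).natDegree ≤ n := by
  apply Polynomial.natDegree_sum_le_of_forall_le
  intro k hk
  refine le_trans (Polynomial.natDegree_C_mul_le _ _) ?_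
  rw [Polynomial.natDegree_X_pow]
  exact Nat.lt_succ_iff.mp (Finset.mem_range.mp hk)

lemma deg_pOm4 : (pOm4 n a).natDegree ≤ n - 1 := by
  apply Polynomial.natDegree_sum_le_of_forall_le
  intro k hk
  refine le_trans (Polynomial.natDegree_C_mul_le _ _) ?_
  rw [Polynomial.natDegree_X_pow]
  have := Finset.mem_Icc.mp hk
  omega

lemma deg_pOm6 : (pOm6 n a).natDegree ≤ n - 1 := by
  apply Polynomial.natDegree_sum_le_of_forall_le
  intro k hk
  refine le_trans (Polynomial.natDegree_C_mul_le _ _) ?_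
  rw [Polynomial.natDegree_X_pow]
  have := Finset.mem_Icc.mp hk
  omega

lemma deg_pDlt : (pDlt n a).natDegree ≤ 1 := by
  refine le_trans (Polynomial.natDegree_sub_le _ _) (max_le ?_ ?_)
  · exact le_trans (Polynomial.natDegree_C_mul_le _ _) (by simp)
  · simp

lemma deg_pF1 : (pF1 n a).natDegree ≤ n - 1 := by
  refine le_trans (Polynomial.natDegree_sub_le _ _) (max_le ?_ ?_)
  · exact le_trans (Polynomial.natDegree_C_mul_le _ _) (deg_pOm6 n a)
  · exact le_trans (Polynomial.natDegree_C_mul_le _ _) (deg_pOm4 n a)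

lemma deg_p46 : (pOm4 n a + pOm6 n a).natDegree ≤ n - 1 :=
  le_trans (Polynomial.natDegree_add_le _ _) (max_le (deg_pOm4 n a) (deg_pOm6 n a))

lemma deg_pA : (pA n a).natDegree ≤ (n-1) + n :=
  le_trans (Polynomial.natDegree_mul_le)
    (add_le_add (deg_p46 n a) (deg_pOm2 n a))

lemma deg_lin : (C (av n a 1) * X + C (av n a 3)).natDegree ≤ 1 := by
  refine le_trans (Polynomial.natDegree_add_le _ _) (max_le ?_ ?_)
  · exact le_trans (Polynomial.natDegree_C_mul_le _ _) (by simp)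
  · simp

lemma deg_pB : (pB n a).natDegree ≤ n + 1 := by
  refine le_trans (Polynomial.natDegree_sub_le _ _) (max_le ?_ ?_)
  · refine le_trans (Polynomial.natDegree_mul_le) ?_
    have := deg_lin n a
    have := deg_pOm2 n a
    omega
  · refine le_trans (Polynomial.natDegree_mul_le) ?_
    have h1 : (C (om2 n a) * X).natDegree ≤ 1 :=
      le_trans (Polynomial.natDegree_C_mul_le _ _) (by simp)
    have := deg_p46 n a
    omega

lemma deg_pC : (pC n a).natDegree ≤ 2 := by
  refine le_trans (Polynomial.natDegree_mul_le) ?_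
  have h1 : (X * (C (av n a 1) * X + C (av n a 3)) : Polynomial ℝ).natDegree ≤ 2 := by
    refine le_trans (Polynomial.natDegree_mul_le) ?_
    have := deg_lin n a
    simp only [Polynomial.natDegree_X]
    omega
  simp only [Polynomial.natDegree_C]
  omega

lemma deg_pP (hn : 1 ≤ n) : (pP n a).natDegree ≤ 2*n+1 := by
  have h1 : (pA n a * pDlt n a ^ 2).natDegree ≤ 2*n+1 := by
    refine le_trans (Polynomial.natDegree_mul_le) ?_
    have h2 : (pDlt n a ^ 2).natDegree ≤ 2 :=
      le_trans (Polynomial.natDegree_pow_le) (by have := deg_pDlt n a; omega)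
    have := deg_pA n a
    omega
  have h2 : (pB n a * pDlt n a * pF1 n a).natDegree ≤ 2*n+1 := by
    refine le_trans (Polynomial.natDegree_mul_le) ?_
    have h3 : (pB n a * pDlt n a).natDegree ≤ n + 2 := by
      refine le_trans (Polynomial.natDegree_mul_le) ?_
      have := deg_pB n a; have := deg_pDlt n a; omega
    have := deg_pF1 n a; omega
  have h3 : (pC n a * pF1 n a ^ 2).natDegree ≤ 2*n+1 := by
    refine le_trans (Polynomial.natDegree_mul_le) ?_
    have h4 : (pF1 n a ^ 2).natDegree ≤ 2*(n-1) := by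
      refine le_trans (Polynomial.natDegree_pow_le) ?_
      have := deg_pF1 n a
      omega
    have := deg_pC n a; omega
  refine le_trans (Polynomial.natDegree_sub_le _ _) (max_le ?_ h3)
  exact le_trans (Polynomial.natDegree_add_le _ _) (max_le h1 h2)

lemma coeff_pOm2 : (pOm2 n a).coeff n = av n a (2+3*n) := by
  rw [pOm2, Polynomial.finset_sum_coeff, Finset.sum_eq_single n]
  · simp
  · intro k hk hkn
    rw [Polynomial.coeff_C_mul, Polynomial.coeff_X_pow, if_neg (Ne.symm hkn), mul_zero]
  · intro h; exact absurd (Finset.self_mem_range_succ n) h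

lemma coeff_pOm4 (hn : 1 ≤ n) : (pOm4 n a).coeff (n-1) = av n a (1+3*n) := by
  rw [pOm4, Polynomial.finset_sum_coeff, Finset.sum_eq_single n]
  · simp
  · intro k hk hkn
    have := Finset.mem_Icc.mp hk
    rw [Polynomial.coeff_C_mul, Polynomial.coeff_X_pow, if_neg (by omega), mul_zero]
  · intro h; exact absurd (Finset.mem_Icc.mpr ⟨hn, le_refl n⟩) h

lemma coeff_pOm6 (hn : 1 ≤ n) : (pOm6 n a).coeff (n-1) = av n a (3+3*n) := by
  rw [pOm6, Polynomial.finset_sum_coeff, Finset.sum_eq_single n]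
  · simp
  · intro k hk hkn
    have := Finset.mem_Icc.mp hk
    rw [Polynomial.coeff_C_mul, Polynomial.coeff_X_pow, if_neg (by omega), mul_zero]
  · intro h; exact absurd (Finset.mem_Icc.mpr ⟨hn, le_refl n⟩) h

lemma coeff_pDlt : (pDlt n a).coeff 1 = av n a 1 / om1 n a := by
  simp [pDlt]

lemma coeff_pF1 (hn : 1 ≤ n) :
    (pF1 n a).coeff (n-1) = (om3 n a)⁻¹ * av n a (3+3*n) - (om1 n a)⁻¹ * av n a (1+3*n) := by
  simp [pF1, coeff_pOm4 n a hn, coeff_pOm6 n a hn]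

lemma coeff_pP (hn : 1 ≤ n) : (pP n a).coeff (2*n+1)
    = ((av n a (1+3*n) + av n a (3+3*n)) * av n a (2+3*n)) * (av n a 1 / om1 n a)^2
      + (av n a 1 * av n a (2+3*n)) * (av n a 1 / om1 n a) *
        ((om3 n a)⁻¹ * av n a (3+3*n) - (om1 n a)⁻¹ * av n a (1+3*n)) := by
  have hA : (pA n a * pDlt n a ^ 2).coeff (2*n+1)
      = ((av n a (1+3*n) + av n a (3+3*n)) * av n a (2+3*n)) * (av n a 1 / om1 n a)^2 := by
    have hd2 : (pDlt n a ^ 2).natDegree ≤ 2 :=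
      le_trans (Polynomial.natDegree_pow_le) (by have := deg_pDlt n a; omega)
    have h := Polynomial.coeff_mul_add_eq_of_natDegree_le (deg_pA n a) hd2
    rw [show 2*n+1 = (n-1) + n + 2 by omega, h]
    have hc2 : (pDlt n a ^ 2).coeff 2 = (av n a 1 / om1 n a)^2 := by
      rw [sq, sq, Polynomial.coeff_mul_add_eq_of_natDegree_le (deg_pDlt n a) (deg_pDlt n a),
        coeff_pDlt]
    have hcA : (pA n a).coeff ((n-1) + n) = (av n a (1+3*n) + av n a (3+3*n)) * av n a (2+3*n) := by
      rw [pA, Polynomial.coeff_mul_add_eq_of_natDegree_le (deg_p46 n a) (deg_pOm2 n a),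
        Polynomial.coeff_add, coeff_pOm4 n a hn, coeff_pOm6 n a hn, coeff_pOm2]
    rw [hcA, hc2]
  have hcB : (pB n a).coeff (n+1) = av n a 1 * av n a (2+3*n) := by
    rw [pB, Polynomial.coeff_sub]
    have h1 : ((C (av n a 1) * X + C (av n a 3)) * pOm2 n a).coeff (n+1)
        = av n a 1 * av n a (2+3*n) := by
      rw [show n+1 = 1+n by omega,
        Polynomial.coeff_mul_add_eq_of_natDegree_le (deg_lin n a) (deg_pOm2 n a), coeff_pOm2]
      simp
    have h2 : (C (om2 n a) * X * (pOm4 n a + pOm6 n a)).coeff (n+1) = 0 := by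
      apply Polynomial.coeff_eq_zero_of_natDegree_lt
      refine lt_of_le_of_lt (Polynomial.natDegree_mul_le) ?_
      have h3 : (C (om2 n a) * X).natDegree ≤ 1 :=
        le_trans (Polynomial.natDegree_C_mul_le _ _) (by simp)
      have := deg_p46 n a
      omega
    rw [h1, h2, sub_zero]
  have hB : (pB n a * pDlt n a * pF1 n a).coeff (2*n+1)
      = (av n a 1 * av n a (2+3*n)) * (av n a 1 / om1 n a) *
        ((om3 n a)⁻¹ * av n a (3+3*n) - (om1 n a)⁻¹ * av n a (1+3*n)) := by
    have hBD : (pB n a * pDlt n a).natDegree ≤ n + 2 := by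
      refine le_trans (Polynomial.natDegree_mul_le) ?_
      have := deg_pB n a; have := deg_pDlt n a; omega
    have h := Polynomial.coeff_mul_add_eq_of_natDegree_le hBD (deg_pF1 n a)
    rw [show 2*n+1 = (n+2) + (n-1) by omega, h, coeff_pF1 n a hn]
    have hBD2 : (pB n a * pDlt n a).coeff (n+2)
        = (av n a 1 * av n a (2+3*n)) * (av n a 1 / om1 n a) := by
      rw [show n+2 = (n+1)+1 by omega,
        Polynomial.coeff_mul_add_eq_of_natDegree_le (deg_pB n a) (deg_pDlt n a), hcB, coeff_pDlt]
    rw [hBD2]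
  have hC : (pC n a * pF1 n a ^ 2).coeff (2*n+1) = 0 := by
    apply Polynomial.coeff_eq_zero_of_natDegree_lt
    refine lt_of_le_of_lt (Polynomial.natDegree_mul_le) ?_
    have h4 : (pF1 n a ^ 2).natDegree ≤ 2*(n-1) :=
      le_trans (Polynomial.natDegree_pow_le) (by have := deg_pF1 n a; omega)
    have := deg_pC n a
    omega
  rw [pP, Polynomial.coeff_sub, Polynomial.coeff_add, hA, hB, hC, sub_zero]

variable (ha : ∀ j, 0 < a j)

include ha

lemma av_pos {j : ℕ} (h1 : 1 ≤ j) (h2 : j ≤ 3*n+3) : 0 < av n a j := by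
  unfold av
  rw [dif_pos (by omega : j - 1 < 3*n+3)]
  exact ha _

lemma om1_pos : 0 < om1 n a := by
  refine Finset.sum_pos (fun k hk => ?_) ⟨0, by simp⟩
  have := Finset.mem_range.mp hk
  exact av_pos n a ha (by omega) (by omega)

lemma om3_pos : 0 < om3 n a := by
  refine Finset.sum_pos (fun k hk => ?_) ⟨0, by simp⟩
  have := Finset.mem_range.mp hk
  exact av_pos n a ha (by omega) (by omega)

lemma omsum_pos : 0 < om1 n a + om2 n a + om3 n a := by
  have h1 : av n a 1 ≤ om1 n a := by
    have := Finset.single_le_sum (f := fun k => av n a (1+3*k))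
      (fun k hk => (av_pos n a ha (j := 1+3*k) (by omega)
        (by have := Finset.mem_range.mp hk; omega)).le)
      (Finset.mem_range.mpr (Nat.succ_pos n))
    simpa [om1] using this
  have h3 : av n a 3 ≤ om3 n a := by
    have := Finset.single_le_sum (f := fun k => av n a (3+3*k))
      (fun k hk => (av_pos n a ha (j := 3+3*k) (by omega)
        (by have := Finset.mem_range.mp hk; omega)).le)
      (Finset.mem_range.mpr (Nat.succ_pos n))
    simpa [om3] using this
  have h2 : 0 < ∑ k ∈ Finset.range (n+1), av n a (2+3*k) := by
    refine Finset.sum_pos (fun k hk => ?_) ⟨0, by simp⟩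
    have := Finset.mem_range.mp hk
    exact av_pos n a ha (by omega) (by omega)
  rw [om2]
  linarith

lemma Om2_pos (hξ : 0 < ξ) : 0 < Om2 n a ξ := by
  refine Finset.sum_pos (fun k hk => ?_) ⟨0, by simp⟩
  have := Finset.mem_range.mp hk
  exact mul_pos (av_pos n a ha (by omega) (by omega)) (pow_pos hξ k)

lemma Om4_pos (hn : 1 ≤ n) (hξ : 0 < ξ) : 0 < Om4 n a ξ := by
  refine Finset.sum_pos (fun k hk => ?_) ⟨1, Finset.mem_Icc.mpr ⟨le_refl 1, hn⟩⟩
  have := Finset.mem_Icc.mp hk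
  exact mul_pos (av_pos n a ha (by omega) (by omega)) (pow_pos hξ _)

lemma Om6_pos (hn : 1 ≤ n) (hξ : 0 < ξ) : 0 < Om6 n a ξ := by
  refine Finset.sum_pos (fun k hk => ?_) ⟨1, Finset.mem_Icc.mpr ⟨le_refl 1, hn⟩⟩
  have := Finset.mem_Icc.mp hk
  exact mul_pos (av_pos n a ha (by omega) (by omega)) (pow_pos hξ _)

lemma Ap_pos (hn : 1 ≤ n) (hξ : 0 < ξ) : 0 < Ap n a ξ :=
  mul_pos (add_pos (Om4_pos n a ξ ha hn hξ) (Om6_pos n a ξ ha hn hξ)) (Om2_pos n a ξ ha hξ)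

lemma Cp_pos (hξ : 0 < ξ) : 0 < Cp n a ξ := by
  refine mul_pos (mul_pos hξ ?_) (omsum_pos n a ha)
  have h1 := av_pos n a ha (j := 1) (by omega) (by omega)
  have h3 := av_pos n a ha (j := 3) (by omega) (by omega)
  nlinarith

lemma xistar_pos : 0 < xistar n a := by
  have h1 := av_pos n a ha (j := 1) (by omega) (by omega)
  have h3 := av_pos n a ha (j := 3) (by omega) (by omega)
  exact div_pos (mul_pos (om1_pos n a ha) h3) (mul_pos h1 (om3_pos n a ha))

lemma Dlt_fact : Dlt n a ξ = av n a 1 / om1 n a * (ξ - xistar n a) := by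
  have h1 := (av_pos n a ha (j := 1) (by omega) (by omega)).ne'
  have h3 := (av_pos n a ha (j := 3) (by omega) (by omega)).ne'
  have hw1 := (om1_pos n a ha).ne'
  have hw3 := (om3_pos n a ha).ne'
  rw [Dlt, xistar]
  field_simp

lemma Dlt_pos (hξ : xistar n a < ξ) : 0 < Dlt n a ξ := by
  rw [Dlt_fact n a ξ ha]
  have h1 := av_pos n a ha (j := 1) (by omega) (by omega)
  have := om1_pos n a ha
  have : 0 < av n a 1 / om1 n a := by positivity
  nlinarith

lemma Dlt_neg (hξ : ξ < xistar n a) : Dlt n a ξ < 0 := by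
  rw [Dlt_fact n a ξ ha]
  have h1 := av_pos n a ha (j := 1) (by omega) (by omega)
  have := om1_pos n a ha
  have : 0 < av n a 1 / om1 n a := by positivity
  nlinarith

lemma Dlt_xistar : Dlt n a (xistar n a) = 0 := by
  rw [Dlt_fact n a _ ha]
  simp

lemma Pp_xistar : Pp n a (xistar n a) = -(Cp n a (xistar n a)) * (F1 n a (xistar n a))^2 := by
  rw [Pp, Dlt_xistar n a ha]
  ring

omit ha in
lemma Om2_zero : Om2 n a 0 = av n a 2 := by
  rw [Om2, Finset.sum_eq_single 0]
  · simp
  · intro k _ hk0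
    rw [zero_pow hk0, mul_zero]
  · intro h; exact absurd (Finset.mem_range.mpr (by omega)) h

omit ha in
lemma Om4_zero (hn : 1 ≤ n) : Om4 n a 0 = av n a 4 := by
  rw [Om4, Finset.sum_eq_single 1]
  · simp
  · intro k hk hk0
    have := Finset.mem_Icc.mp hk
    rw [zero_pow (by omega), mul_zero]
  · intro h; exact absurd (Finset.mem_Icc.mpr ⟨le_refl 1, hn⟩) h

omit ha in
lemma Om6_zero (hn : 1 ≤ n) : Om6 n a 0 = av n a 6 := by
  rw [Om6, Finset.sum_eq_single 1]
  · simp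
  · intro k hk hk0
    have := Finset.mem_Icc.mp hk
    rw [zero_pow (by omega), mul_zero]
  · intro h; exact absurd (Finset.mem_Icc.mpr ⟨le_refl 1, hn⟩) h

lemma Pp_zero_pos (hn : 1 ≤ n) : 0 < Pp n a 0 := by
  have h1 := av_pos n a ha (j := 1) (by omega) (by omega)
  have h2 := av_pos n a ha (j := 2) (by omega) (by omega)
  have h3 := av_pos n a ha (j := 3) (by omega) (by omega)
  have h4 := av_pos n a ha (j := 4) (by omega) (by omega)
  have h6 := av_pos n a ha (j := 6) (by omega) (by omega)
  have hw1 := om1_pos n a ha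
  have hw3 := om3_pos n a ha
  rw [Pp, Ap, Bp, Cp, Dlt, F1, Om2_zero n a, Om4_zero n a hn, Om6_zero n a hn]
  have key : ((av n a 4 + av n a 6) * av n a 2) * (av n a 1 / om1 n a * 0 - av n a 3 / om3 n a)^2
      + ((av n a 1 * 0 + av n a 3) * av n a 2 - om2 n a * 0 * (av n a 4 + av n a 6)) *
        (av n a 1 / om1 n a * 0 - av n a 3 / om3 n a) *
        (av n a 6 / om3 n a - av n a 4 / om1 n a)
      - 0 * (av n a 1 * 0 + av n a 3) * (om1 n a + om2 n a + om3 n a) *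
        (av n a 6 / om3 n a - av n a 4 / om1 n a)^2
      = av n a 2 * (av n a 3)^2 * av n a 4 * (om1 n a + om3 n a) / (om1 n a * (om3 n a)^2) := by
    field_simp
    ring
  rw [key]
  positivity

lemma coeff_pP_pos (hn : 1 ≤ n) : 0 < (pP n a).coeff (2*n+1) := by
  rw [coeff_pP n a hn]
  have h1 := av_pos n a ha (j := 1) (by omega) (by omega)
  have h2 := av_pos n a ha (j := 2+3*n) (by omega) (by omega)
  have hu := av_pos n a ha (j := 1+3*n) (by omega) (by omega)
  have hv := av_pos n a ha (j := 3+3*n) (by omega) (by omega)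
  have hw1 := om1_pos n a ha
  have hw3 := om3_pos n a ha
  have key : ((av n a (1+3*n) + av n a (3+3*n)) * av n a (2+3*n)) * (av n a 1 / om1 n a)^2
      + (av n a 1 * av n a (2+3*n)) * (av n a 1 / om1 n a) *
        ((om3 n a)⁻¹ * av n a (3+3*n) - (om1 n a)⁻¹ * av n a (1+3*n))
      = av n a (2+3*n) * (av n a 1)^2 * av n a (3+3*n) * (om3 n a + om1 n a)
        / ((om1 n a)^2 * om3 n a) := by
    field_simp
    ring
  rw [key]
  positivity

omit ha in
lemma F1_continuous : Continuous (F1 n a) := by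
  have h : F1 n a = fun t => (pF1 n a).eval t := funext fun t => (eval_pF1 n a t).symm
  rw [h]; exact (pF1 n a).continuous

omit ha in
lemma Pp_continuous : Continuous (Pp n a) := by
  have h : Pp n a = fun t => (pP n a).eval t := funext fun t => (eval_pP n a t).symm
  rw [h]; exact (pP n a).continuous

end AuxPhos

/-- (At most `2n−1` admissible zeros.) The set of admissible
zeros `{ξ > 0 : ξ ≠ ξ*, P(ξ) = 0, F1(ξ)Δ(ξ) > 0}` has at most `2n−1` elements. -/
theorem at_most_admissible_zeros (n : ℕ) (hn : 2 ≤ n)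
    (a : Fin (3*n+3) → ℝ) (ha : ∀ j, 0 < a j) :
    {ξ : ℝ | 0 < ξ ∧ ξ ≠ xistar n a ∧ Pp n a ξ = 0 ∧
      0 < F1 n a ξ * Dlt n a ξ}.Finite ∧
    {ξ : ℝ | 0 < ξ ∧ ξ ≠ xistar n a ∧ Pp n a ξ = 0 ∧
      0 < F1 n a ξ * Dlt n a ξ}.ncard ≤ 2*n - 1 := by
  have hn1 : 1 ≤ n := by omega
  set s := xistar n a with hsdef
  set S := {ξ : ℝ | 0 < ξ ∧ ξ ≠ s ∧ Pp n a ξ = 0 ∧ 0 < F1 n a ξ * Dlt n a ξ} with hSdef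
  have hmemS : ∀ {t : ℝ}, t ∈ S →
      0 < t ∧ t ≠ s ∧ Pp n a t = 0 ∧ 0 < F1 n a t * Dlt n a t := by
    intro t ht; rw [hSdef] at ht; exact ht
  have hp0 : (pP n a) ≠ 0 := by
    intro h
    have hc := coeff_pP_pos n a ha hn1
    rw [h] at hc; simp at hc
  have hdegeq : (pP n a).natDegree = 2*n+1 :=
    le_antisymm (deg_pP n a hn1)
      (Polynomial.le_natDegree_of_ne_zero (ne_of_gt (coeff_pP_pos n a ha hn1)))
  have hSsub : S ⊆ {x | (pP n a).IsRoot x} := by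
    intro ξ hξ
    have h := (hmemS hξ).2.2.1
    simp only [Set.mem_setOf_eq, Polynomial.IsRoot]
    rw [eval_pP]; exact h
  have hSfin : S.Finite := (Polynomial.finite_setOf_isRoot hp0).subset hSsub
  have hF1c : Continuous (F1 n a) := F1_continuous n a
  have hPc : Continuous (Pp n a) := Pp_continuous n a
  have hxpos : 0 < s := xistar_pos n a ha
  have hP0 : 0 < Pp n a 0 := Pp_zero_pos n a ha hn1
  have hlc : 0 < (pP n a).leadingCoeff := by
    rw [Polynomial.leadingCoeff, hdegeq]; exact coeff_pP_pos n a ha hn1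
  have hdegpos : 0 < (pP n a).degree := by
    rw [Polynomial.degree_eq_natDegree hp0, hdegeq]
    exact_mod_cast (by omega : 0 < 2*n+1)
  have htend := Polynomial.tendsto_atTop_of_leadingCoeff_nonneg (pP n a) hdegpos hlc.le
  have hev : ∀ᶠ M in Filter.atTop, (0:ℝ) < (pP n a).eval M := htend.eventually_gt_atTop 0
  have hev2 : ∀ᶠ M in Filter.atTop, ∀ r ∈ (pP n a).roots.toFinset, r < M :=
    (pP n a).roots.toFinset.eventually_all.mpr (fun r _ => Filter.eventually_gt_atTop r)
  have hev3 : ∀ᶠ M in Filter.atTop, s < M := Filter.eventually_gt_atTop s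
  obtain ⟨M, hM1, hM2, hM3⟩ := (hev.and (hev2.and hev3)).exists
  have hMpos : (0:ℝ) < M := lt_trans hxpos hM3
  have hPsneg : F1 n a s ≠ 0 → Pp n a s < 0 := by
    intro h
    rw [Pp_xistar n a ha]
    have hC := Cp_pos n a s ha hxpos
    nlinarith [pow_two_pos_of_ne_zero h]
  have hkey : ∃ ρ, 0 < ρ ∧ Pp n a ρ = 0 ∧ ρ ∉ S := by
    rcases lt_trichotomy (F1 n a s) 0 with hF1s | hF1s | hF1s
    · by_cases hA2 : ∃ t ∈ S, s < t
      · obtain ⟨th, hthS, hthgt⟩ := hA2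
        obtain ⟨hthpos, _, _, hthprod⟩ := hmemS hthS
        have hdth : 0 < Dlt n a th := Dlt_pos n a th ha hthgt
        have hF1th : 0 < F1 n a th := by nlinarith
        have hZc : IsClosed (Set.Icc s th ∩ F1 n a ⁻¹' {0}) :=
          isClosed_Icc.inter (isClosed_singleton.preimage hF1c)
        have hZne : (Set.Icc s th ∩ F1 n a ⁻¹' {0}).Nonempty := by
          obtain ⟨u, hu, hu0⟩ := intermediate_value_Ioo hthgt.le hF1c.continuousOn
            (Set.mem_Ioo.mpr ⟨hF1s, hF1th⟩)
          exact ⟨u, ⟨Set.mem_Icc.mpr ⟨hu.1.le, hu.2.le⟩, hu0⟩⟩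
        have hZbdd : BddBelow (Set.Icc s th ∩ F1 n a ⁻¹' {0}) := ⟨s, fun t ht => ht.1.1⟩
        set σ := sInf (Set.Icc s th ∩ F1 n a ⁻¹' {0}) with hσdef
        obtain ⟨hσIcc, hσ0⟩ := hZc.csInf_mem hZne hZbdd
        rw [← hσdef] at hσIcc hσ0
        have hσ0' : F1 n a σ = 0 := hσ0
        have hσgt : s < σ := by
          rcases eq_or_lt_of_le hσIcc.1 with h | h
          · exfalso; rw [← h] at hσ0'; linarith
          · exact h
        have hF1neg : ∀ t, s < t → t < σ → F1 n a t < 0 := by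
          intro t ht1 ht2
          by_contra hge
          rcases eq_or_lt_of_le (not_lt.mp hge) with heq | hpos
          · have hm : t ∈ Set.Icc s th ∩ F1 n a ⁻¹' {0} :=
              ⟨Set.mem_Icc.mpr ⟨ht1.le, le_trans ht2.le hσIcc.2⟩, heq.symm⟩
            exact absurd (csInf_le hZbdd hm) (not_le.mpr ht2)
          · obtain ⟨u, hu, hu0⟩ := intermediate_value_Ioo ht1.le hF1c.continuousOn
              (Set.mem_Ioo.mpr ⟨hF1s, hpos⟩)
            have hm : u ∈ Set.Icc s th ∩ F1 n a ⁻¹' {0} :=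
              ⟨Set.mem_Icc.mpr ⟨hu.1.le, le_trans hu.2.le (le_trans ht2.le hσIcc.2)⟩, hu0⟩
            have := csInf_le hZbdd hm
            linarith [hu.2]
        have hσpos : 0 < σ := lt_trans hxpos hσgt
        have hPσ : 0 < Pp n a σ := by
          have he : Pp n a σ = Ap n a σ * (Dlt n a σ)^2 := by rw [Pp, hσ0']; ring
          rw [he]
          exact mul_pos (Ap_pos n a σ ha hn1 hσpos) (pow_pos (Dlt_pos n a σ ha hσgt) 2)
        obtain ⟨ρ, hρ, hρ0⟩ := intermediate_value_Ioo hσgt.le hPc.continuousOn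
          (Set.mem_Ioo.mpr ⟨hPsneg (ne_of_lt hF1s), hPσ⟩)
        refine ⟨ρ, lt_trans hxpos hρ.1, hρ0, ?_⟩
        intro hρS
        have h4 := (hmemS hρS).2.2.2
        have hF1ρ : F1 n a ρ < 0 := hF1neg ρ hρ.1 hρ.2
        have hDρ : 0 < Dlt n a ρ := Dlt_pos n a ρ ha hρ.1
        nlinarith
      · push_neg at hA2
        have hPM : 0 < Pp n a M := by rw [← eval_pP]; exact hM1
        obtain ⟨ρ, hρ, hρ0⟩ := intermediate_value_Ioo hM3.le hPc.continuousOn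
          (Set.mem_Ioo.mpr ⟨hPsneg (ne_of_lt hF1s), hPM⟩)
        exact ⟨ρ, lt_trans hxpos hρ.1, hρ0,
          fun hρS => absurd hρ.1 (not_lt.mpr (hA2 ρ hρS))⟩
    · refine ⟨s, hxpos, ?_, fun hsS => (hmemS hsS).2.1 rfl⟩
      rw [Pp_xistar n a ha, hF1s]; ring
    · by_cases hA1 : ∃ t ∈ S, t < s
      · obtain ⟨th, hthS, hthlt⟩ := hA1
        obtain ⟨hthpos, _, _, hthprod⟩ := hmemS hthS
        have hdth : Dlt n a th < 0 := Dlt_neg n a th ha hthlt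
        have hF1th : F1 n a th < 0 := by nlinarith
        have hZc : IsClosed (Set.Icc th s ∩ F1 n a ⁻¹' {0}) :=
          isClosed_Icc.inter (isClosed_singleton.preimage hF1c)
        have hZne : (Set.Icc th s ∩ F1 n a ⁻¹' {0}).Nonempty := by
          obtain ⟨u, hu, hu0⟩ := intermediate_value_Ioo hthlt.le hF1c.continuousOn
            (Set.mem_Ioo.mpr ⟨hF1th, hF1s⟩)
          exact ⟨u, ⟨Set.mem_Icc.mpr ⟨hu.1.le, hu.2.le⟩, hu0⟩⟩
        have hZbdd : BddAbove (Set.Icc th s ∩ F1 n a ⁻¹' {0}) := ⟨s, fun t ht => ht.1.2⟩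
        set σ := sSup (Set.Icc th s ∩ F1 n a ⁻¹' {0}) with hσdef
        obtain ⟨hσIcc, hσ0⟩ := hZc.csSup_mem hZne hZbdd
        rw [← hσdef] at hσIcc hσ0
        have hσ0' : F1 n a σ = 0 := hσ0
        have hσlt : σ < s := by
          rcases eq_or_lt_of_le hσIcc.2 with h | h
          · exfalso; rw [h] at hσ0'; linarith
          · exact h
        have hF1posI : ∀ t, σ < t → t < s → 0 < F1 n a t := by
          intro t ht1 ht2
          by_contra hge
          rcases eq_or_lt_of_le (not_lt.mp hge) with heq | hneg
          · have hm : t ∈ Set.Icc th s ∩ F1 n a ⁻¹' {0} :=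
              ⟨Set.mem_Icc.mpr ⟨le_trans hσIcc.1 ht1.le, ht2.le⟩, heq⟩
            exact absurd (le_csSup hZbdd hm) (not_le.mpr ht1)
          · obtain ⟨u, hu, hu0⟩ := intermediate_value_Ioo ht2.le hF1c.continuousOn
              (Set.mem_Ioo.mpr ⟨hneg, hF1s⟩)
            have hm : u ∈ Set.Icc th s ∩ F1 n a ⁻¹' {0} :=
              ⟨Set.mem_Icc.mpr ⟨le_trans hσIcc.1 (le_trans ht1.le hu.1.le), hu.2.le⟩, hu0⟩
            have := le_csSup hZbdd hm
            linarith [hu.1]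
        have hσpos : 0 < σ := lt_of_lt_of_le hthpos hσIcc.1
        have hPσ : 0 < Pp n a σ := by
          have he : Pp n a σ = Ap n a σ * (Dlt n a σ)^2 := by rw [Pp, hσ0']; ring
          rw [he]
          exact mul_pos (Ap_pos n a σ ha hn1 hσpos)
            (pow_two_pos_of_ne_zero (ne_of_lt (Dlt_neg n a σ ha hσlt)))
        obtain ⟨ρ, hρ, hρ0⟩ := intermediate_value_Ioo' hσlt.le hPc.continuousOn
          (Set.mem_Ioo.mpr ⟨hPsneg (ne_of_gt hF1s), hPσ⟩)
        refine ⟨ρ, lt_trans hσpos hρ.1, hρ0, ?_⟩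
        intro hρS
        have h4 := (hmemS hρS).2.2.2
        have hF1ρ : 0 < F1 n a ρ := hF1posI ρ hρ.1 hρ.2
        have hDρ : Dlt n a ρ < 0 := Dlt_neg n a ρ ha hρ.2
        nlinarith
      · push_neg at hA1
        obtain ⟨ρ, hρ, hρ0⟩ := intermediate_value_Ioo' hxpos.le hPc.continuousOn
          (Set.mem_Ioo.mpr ⟨hPsneg (ne_of_gt hF1s), hP0⟩)
        exact ⟨ρ, hρ.1, hρ0, fun hρS => absurd hρ.2 (not_lt.mpr (hA1 ρ hρS))⟩
  obtain ⟨ρ, hρpos, hρroot, hρnot⟩ := hkey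
  have hprodpos : 0 < (pP n a).eval 0 * (pP n a).eval M := by
    have he0 : (pP n a).eval 0 = Pp n a 0 := eval_pP n a 0
    have heM : (pP n a).eval M = Pp n a M := eval_pP n a M
    rw [he0, heM]
    exact mul_pos hP0 (by rw [← heM]; exact hM1)
  have hEven : Even (Multiset.card ((pP n a).roots.filter (fun r => 0 < r ∧ r < M))) :=
    (aux_sign_parity ((pP n a).natDegree) (pP n a) le_rfl 0 M hMpos.le
      (ne_of_gt hprodpos)).mp hprodpos
  have hcard2n : Multiset.card ((pP n a).roots.filter (fun r => 0 < r ∧ r < M)) ≤ 2*n := by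
    have hle : Multiset.card ((pP n a).roots.filter (fun r => 0 < r ∧ r < M)) ≤ 2*n+1 := by
      refine le_trans (Multiset.card_le_card (Multiset.filter_le _ _)) ?_
      rw [← hdegeq]; exact (pP n a).card_roots'
    obtain ⟨k, hk⟩ := hEven
    omega
  have hFsub : insert ρ hSfin.toFinset ⊆
      ((pP n a).roots.filter (fun r => 0 < r ∧ r < M)).toFinset := by
    intro ξ hξ
    have hroot : (pP n a).IsRoot ξ ∧ 0 < ξ := by
      rcases Finset.mem_insert.mp hξ with rfl | hξS
      · exact ⟨by rw [Polynomial.IsRoot, eval_pP]; exact hρroot, hρpos⟩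
      · have hm := hSfin.mem_toFinset.mp hξS
        exact ⟨hSsub hm, (hmemS hm).1⟩
    have hmem : ξ ∈ (pP n a).roots := (Polynomial.mem_roots hp0).mpr hroot.1
    exact Multiset.mem_toFinset.mpr (Multiset.mem_filter.mpr
      ⟨hmem, hroot.2, hM2 ξ (Multiset.mem_toFinset.mpr hmem)⟩)
  have hins : (insert ρ hSfin.toFinset).card = hSfin.toFinset.card + 1 :=
    Finset.card_insert_of_notMem (fun h => hρnot (hSfin.mem_toFinset.mp h))
  have hfinal : hSfin.toFinset.card + 1 ≤ 2*n := by
    rw [← hins]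
    exact le_trans (Finset.card_le_card hFsub)
      (le_trans (Multiset.toFinset_card_le _) hcard2n)
  refine ⟨hSfin, ?_⟩
  rw [Set.ncard_eq_toFinset_card _ hSfin]
  omega

end Phos
end
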